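/- Assume S_F ≠ ∅. Let Ω be a compact subset of Σ_k × cl A_F such that F(Ω) = Ω. Then Ω ⊆ cl(graph ρ). -/

import Mathlib

open Set Function Filter Topology

noncomputable section

/-- The shift map on two-sided sequences. -/
def shiftMap {k : ℕ} (θ : ℤ → Fin k) : ℤ → Fin k := fun i => θ (i + 1)

/-- The step skew product `F(θ, x) = (σ θ, f_{θ₀} x)`. -/
def skewProd {k : ℕ} {M : Type*} (f : Fin k → M → M) :
    (ℤ → Fin k) × M → (ℤ → Fin k) × M :=
  fun p => (shiftMap p.1, f (p.1 0) p.2)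

/-- Backward composition `f_{θ₋₁} ∘ ⋯ ∘ f_{θ₋ₙ}`. -/
def bcomp {k : ℕ} {M : Type*} (f : Fin k → M → M) (θ : ℤ → Fin k) : ℕ → M → M
  | 0 => id
  | n + 1 => bcomp f θ n ∘ f (θ (-((n : ℤ) + 1)))

/-- The spine `I_θ = ⋂_{n ≥ 1} f_{θ₋₁} ∘ ⋯ ∘ f_{θ₋ₙ}(M)`. -/
def spine {k : ℕ} {M : Type*} (f : Fin k → M → M) (θ : ℤ → Fin k) : Set M :=
  ⋂ n : ℕ, bcomp f θ (n + 1) '' Set.univ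

/-- The set of weakly hyperbolic sequences: those `θ` whose spine is a singleton. -/
def weakHyp {k : ℕ} {M : Type*} (f : Fin k → M → M) : Set (ℤ → Fin k) :=
  {θ | ∃ x : M, spine f θ = {x}}

/-- The ω-limit set of a point `z` under iteration of `F`: limits of subsequences
`F^{n_j}(z)` with `n_j → ∞`. -/
def omegaLim {α : Type*} [TopologicalSpace α] (F : α → α) (z : α) : Set α :=
  {w | ∃ φ : ℕ → ℕ, StrictMono φ ∧ Tendsto (fun j => F^[φ j] z) atTop (𝓝 w)}



lemma bcomp_congr {k : ℕ} {M : Type*} (f : Fin k → M → M) {θ η : ℤ → Fin k} (n : ℕ)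
    (h : ∀ i : ℤ, -(n : ℤ) ≤ i → i < 0 → θ i = η i) :
    bcomp f θ n = bcomp f η n := by
  induction n with
  | zero => rfl
  | succ n ih =>
    simp only [bcomp]
    rw [ih (fun i h1 h2 => h i (by push_cast at h1 ⊢; omega) h2),
      h (-((n : ℤ) + 1)) (by push_cast; omega) (by omega)]

lemma bcomp_add {k : ℕ} {M : Type*} (f : Fin k → M → M) (θ : ℤ → Fin k) (n j : ℕ) :
    bcomp f θ (n + j) = bcomp f θ n ∘ bcomp f (fun i => θ (i - n)) j := by
  induction j with
  | zero => rfl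
  | succ j ih =>
    show bcomp f θ ((n + j) + 1) = _
    simp only [bcomp, ih]
    have : -((j : ℤ) + 1) - (n : ℤ) = -(((n + j : ℕ) : ℤ) + 1) := by push_cast; ring
    rw [comp_assoc]
    simp only [this]

lemma bcomp_shift {k : ℕ} {M : Type*} (f : Fin k → M → M) (θ : ℤ → Fin k) (n : ℕ) :
    bcomp f θ (n + 1) = f (θ (-1)) ∘ bcomp f (fun i => θ (i - 1)) n := by
  induction n with
  | zero => simp [bcomp]
  | succ n ih =>
    show bcomp f θ ((n + 1) + 1) = _
    simp only [bcomp] at ih ⊢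
    rw [ih]
    have : -((n : ℤ) + 1) - 1 = -(((n + 1 : ℕ) : ℤ) + 1) := by push_cast; ring
    simp only [comp_assoc, this]

lemma bcomp_continuous {k : ℕ} {M : Type*} [TopologicalSpace M] (f : Fin k → M → M) (hf : ∀ i, Continuous (f i)) (θ : ℤ → Fin k) (n : ℕ) :
    Continuous (bcomp f θ n) := by
  induction n with
  | zero => exact continuous_id
  | succ n ih => exact ih.comp (hf _)

lemma bcomp_image_antitone {k : ℕ} {M : Type*} (f : Fin k → M → M) (θ : ℤ → Fin k) :
    Antitone (fun n => bcomp f θ n '' Set.univ) := by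
  apply antitone_nat_of_succ_le
  rintro n _ ⟨x, -, rfl⟩
  exact ⟨f (θ (-((n : ℤ) + 1))) x, trivial, rfl⟩

lemma spine_splice {k : ℕ} {M : Type*} [MetricSpace M] [CompactSpace M] (f : Fin k → M → M) (hf : ∀ i, Continuous (f i))
    (θ ξ : ℤ → Fin k) (z : M) (hξ : spine f ξ = {z}) (n : ℕ) :
    spine f (fun i => if -(n : ℤ) ≤ i then θ i else ξ (i + n)) = {bcomp f θ n z} := by
  set ζ : ℤ → Fin k := fun i => if -(n : ℤ) ≤ i then θ i else ξ (i + n) with hζ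
  have hbn : bcomp f ζ n = bcomp f θ n := by
    apply bcomp_congr
    intro i h1 h2
    simp only [hζ, if_pos h1]
  have hbs : bcomp f (fun i => ζ (i - n)) = bcomp f ξ := by
    funext j
    apply bcomp_congr
    intro i h1 h2
    have : ¬ (-(n:ℤ) ≤ i - n) := by omega
    simp only [hζ, if_neg this, sub_add_cancel]
  have key : ∀ j : ℕ, bcomp f ζ (n + j) = bcomp f θ n ∘ bcomp f ξ j := by
    intro j
    rw [bcomp_add, hbn, hbs]
  -- spine ζ equals the intersection over the cofinal family n + j + 1
  have hspine : spine f ζ = ⋂ j : ℕ, bcomp f θ n '' (bcomp f ξ (j + 1) '' Set.univ) := by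
    apply Set.Subset.antisymm
    · intro x hx
      apply Set.mem_iInter.2
      intro j
      have := Set.mem_iInter.1 hx (n + j)
      rw [show n + j + 1 = n + (j + 1) by ring, key (j + 1), Set.image_comp] at this
      exact this
    · intro x hx
      apply Set.mem_iInter.2
      intro m
      have h1 : bcomp f ζ (n + (m + 1)) '' Set.univ ⊆ bcomp f ζ (m + 1) '' Set.univ :=
        bcomp_image_antitone f ζ (by omega)
      apply h1
      rw [key (m + 1), Set.image_comp]
      exact Set.mem_iInter.1 hx m
  rw [hspine]
  apply Set.Subset.antisymm
  · intro x hx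
    set C : ℕ → Set M := fun j => (bcomp f θ n) ⁻¹' {x} ∩ bcomp f ξ (j + 1) '' Set.univ with hC
    have hKc : ∀ j : ℕ, IsCompact (bcomp f ξ (j + 1) '' Set.univ) := fun j =>
      isCompact_univ.image (bcomp_continuous f hf ξ (j + 1))
    have hCne : ∀ j, (C j).Nonempty := by
      intro j
      obtain ⟨y, hy, hyx⟩ := Set.mem_iInter.1 hx j
      exact ⟨y, by simpa using hyx, hy⟩
    have hCcl : ∀ j, IsClosed (C j) := fun j =>
      (IsClosed.preimage (bcomp_continuous f hf θ n) isClosed_singleton).inter (hKc j).isClosed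
    have hCanti : Antitone C := by
      intro a b hab
      exact Set.inter_subset_inter_right _ (bcomp_image_antitone f ξ (by omega))
    obtain ⟨y, hy⟩ := IsCompact.nonempty_iInter_of_directed_nonempty_isCompact_isClosed C
      (hCanti.directed_ge) hCne (fun j => (hCcl j).isCompact) hCcl
    have hy1 : bcomp f θ n y = x := (Set.mem_iInter.1 hy 0).1
    have hy2 : y ∈ spine f ξ := Set.mem_iInter.2 fun j => (Set.mem_iInter.1 hy j).2
    rw [hξ, Set.mem_singleton_iff] at hy2
    rw [Set.mem_singleton_iff, ← hy1, hy2]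
  · intro x hx
    rw [Set.mem_singleton_iff] at hx
    subst hx
    apply Set.mem_iInter.2
    intro j
    have hz : z ∈ bcomp f ξ (j + 1) '' Set.univ := by
      have : z ∈ spine f ξ := by rw [hξ]; rfl
      exact Set.mem_iInter.1 this j
    exact ⟨z, hz, rfl⟩

lemma back_orbit {k : ℕ} {M : Type*} (f : Fin k → M → M)
    {Ω : Set ((ℤ → Fin k) × M)} (hΩinv : skewProd f '' Ω = Ω) :
    ∀ n : ℕ, ∀ θ x, (θ, x) ∈ Ω →
      ∃ y, ((fun i => θ (i - n)), y) ∈ Ω ∧ bcomp f θ n y = x := by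
  intro n
  induction n with
  | zero =>
    intro θ x h
    refine ⟨x, ?_, rfl⟩
    convert h using 2
    funext i
    norm_num
  | succ n ih =>
    intro θ x h
    rw [← hΩinv] at h
    obtain ⟨⟨η, w⟩, hz, hez⟩ := h
    have h1 : shiftMap η = θ := congrArg Prod.fst hez
    have h2 : f (η 0) w = x := congrArg Prod.snd hez
    have hη : ∀ j : ℤ, η j = θ (j - 1) := by
      intro j
      rw [← h1]
      show η j = η (j - 1 + 1)
      congr 1
      ring
    obtain ⟨y, hyΩ, hyw⟩ := ih η w hz
    refine ⟨y, ?_, ?_⟩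
    · convert hyΩ using 2
      funext i
      rw [hη]
      congr 1
      push_cast
      ring
    · rw [bcomp_shift]
      have hηeq : (fun i : ℤ => θ (i - 1)) = η := by funext j; rw [hη]
      rw [hηeq]
      simp only [Function.comp_apply]
      rw [hyw, ← h2]
      congr 1
      rw [hη]
      norm_num

/-- If `S_F ≠ ∅` and `Ω` is a compact subset of `Σ_k × cl A_F` with `F(Ω) = Ω`, then
`Ω` is contained in the closure of the graph of the coding map. -/
theorem invariant_compact_subset_closure_graph
    {k : ℕ} (hk : 1 ≤ k) {M : Type*} [MetricSpace M] [CompactSpace M] [Nonempty M]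
    (f : Fin k → M → M) (hf : ∀ i, Continuous (f i))
    (hS : (weakHyp f).Nonempty)
    (ρ : (ℤ → Fin k) → M) (hρ : ∀ θ ∈ weakHyp f, spine f θ = {ρ θ})
    (Ω : Set ((ℤ → Fin k) × M)) (hΩc : IsCompact Ω)
    (hΩsub : Ω ⊆ Set.univ ×ˢ closure (ρ '' weakHyp f))
    (hΩinv : skewProd f '' Ω = Ω) :
    Ω ⊆ closure ((fun ϑ => (ϑ, ρ ϑ)) '' weakHyp f) := by
  rintro ⟨θ, x⟩ hmem
  have key : ∀ n : ℕ, ∃ ζ ∈ weakHyp f,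
      (∀ i : ℤ, -(n : ℤ) ≤ i → ζ i = θ i) ∧ dist (ρ ζ) x < 1 / (n + 1) := by
    intro n
    obtain ⟨y, hyΩ, hyx⟩ := back_orbit f hΩinv n θ x hmem
    have hycl : y ∈ closure (ρ '' weakHyp f) := (hΩsub hyΩ).2
    have hcont := bcomp_continuous f hf θ n
    obtain ⟨δ, hδ, hball⟩ := Metric.continuous_iff.1 hcont y (1 / (n + 1)) (by positivity)
    obtain ⟨w, ⟨ξ, hξW, rfl⟩, hwy⟩ := Metric.mem_closure_iff.1 hycl δ hδ
    have hz' : spine f ξ = {ρ ξ} := hρ ξ hξW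
    set ζ : ℤ → Fin k := fun i => if -(n : ℤ) ≤ i then θ i else ξ (i + n) with hζdef
    have hsp := spine_splice f hf θ ξ (ρ ξ) hz' n
    have hζW : ζ ∈ weakHyp f := ⟨bcomp f θ n (ρ ξ), hsp⟩
    have hρζ : ρ ζ = bcomp f θ n (ρ ξ) := by
      have h' := hρ ζ hζW
      rw [h'] at hsp
      exact Set.singleton_eq_singleton_iff.1 hsp
    refine ⟨ζ, hζW, fun i hi => by simp only [hζdef, if_pos hi], ?_⟩
    rw [hρζ, ← hyx]
    exact hball (ρ ξ) (by rwa [dist_comm] at hwy)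
  choose ζ hζW hζθ hζd using key
  have h1 : Tendsto (fun n => ζ n) atTop (𝓝 θ) := by
    rw [tendsto_pi_nhds]
    intro i
    apply tendsto_const_nhds.congr'
    filter_upwards [eventually_ge_atTop (-i).toNat] with n hn
    exact (hζθ n i (by omega)).symm
  have h2 : Tendsto (fun n => ρ (ζ n)) atTop (𝓝 x) := by
    rw [tendsto_iff_dist_tendsto_zero]
    apply squeeze_zero (fun n => dist_nonneg) (fun n => (hζd n).le)
    exact tendsto_one_div_add_atTop_nhds_zero_nat
  have h3 : Tendsto (fun n => (ζ n, ρ (ζ n))) atTop (𝓝 (θ, x)) := h1.prodMk_nhds h2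
  exact mem_closure_of_tendsto h3 (Eventually.of_forall fun n => ⟨ζ n, hζW n, rfl⟩)
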